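/- Let ℏ, m > 0, c ∈ ℂ, and let f : ℝ³ → ℂ be C¹ in a neighborhood of the origin. Define ψ : ℝ³ \ {0} → ℂ by ψ(y) = c/|y| + f(y), and the radial probability current j_r(y) = (ℏ/m) Im[ψ(y)* ∂_r ψ(y)], where ∂_r denotes the radial derivative. Then the limit of the outward probability flux through small spheres exists and equals lim_{r→0} ∫_{S²} r² j_r(rω) d²ω = (4πℏ/m) Im[c* f(0)]; in particular, the current into the boundary {r = 0} can be nonzero. -/

import Mathlib

set_option maxHeartbeats 1000000

open Complex MeasureTheory Metric Real

namespace FluxAux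

noncomputable section

abbrev E3 := EuclideanSpace ℝ (Fin 3)

def Gf (a : ℝ) (c : ℂ) (f : E3 → ℂ) (r : ℝ) (ω : sphere (0:E3) 1) : ℝ :=
  a * (((starRingEnd ℂ) c * f (r • (ω:E3))).im
    + r * ((starRingEnd ℂ) c * (fderiv ℝ f (r • (ω:E3)) (ω:E3))).im
    + r^2 * ((starRingEnd ℂ) (f (r • (ω:E3))) * (fderiv ℝ f (r • (ω:E3)) (ω:E3))).im)

variable {a : ℝ} {c : ℂ} {f : E3 → ℂ} {ε : ℝ}

lemma mem_ball_smul (r : ℝ) (hrε : |r| < ε) (ω : sphere (0:E3) 1) :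
    r • (ω:E3) ∈ ball (0:E3) ε := by
  simp only [mem_ball, dist_zero_right, norm_smul, norm_eq_of_mem_sphere, mul_one,
    Real.norm_eq_abs]
  exact hrε

lemma continuous_Gf_omega (hfc : ContinuousOn f (ball 0 ε))
    (hfd : ContinuousOn (fderiv ℝ f) (ball 0 ε)) {r : ℝ} (hrε : |r| < ε) :
    Continuous (fun ω : sphere (0:E3) 1 => Gf a c f r ω) := by
  have hmap : Continuous (fun ω : sphere (0:E3) 1 => r • (ω:E3)) :=
    by fun_prop
  have hmem : ∀ ω : sphere (0:E3) 1, r • (ω:E3) ∈ ball (0:E3) ε :=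
    fun ω => mem_ball_smul r hrε ω
  have hA : Continuous (fun ω : sphere (0:E3) 1 => f (r • (ω:E3))) :=
    hfc.comp_continuous hmap hmem
  have hB : Continuous (fun ω : sphere (0:E3) 1 => fderiv ℝ f (r • (ω:E3))) :=
    hfd.comp_continuous hmap hmem
  have hD : Continuous (fun ω : sphere (0:E3) 1 => fderiv ℝ f (r • (ω:E3)) (ω:E3)) :=
    hB.clm_apply continuous_subtype_val
  unfold Gf
  exact continuous_const.mul
    (((Complex.continuous_im.comp (continuous_const.mul hA)).add
      (continuous_const.mul (Complex.continuous_im.comp (continuous_const.mul hD)))).add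
      (continuous_const.mul (Complex.continuous_im.comp
        ((Complex.continuous_conj.comp hA).mul hD))))

lemma continuousAt_Gf_r (hε : 0 < ε) (hfc : ContinuousOn f (ball 0 ε))
    (hfd : ContinuousOn (fderiv ℝ f) (ball 0 ε)) (ω : sphere (0:E3) 1) :
    ContinuousAt (fun r : ℝ => Gf a c f r ω) 0 := by
  have hmap : Continuous (fun r : ℝ => r • (ω:E3)) :=
    continuous_id.smul continuous_const
  have h0 : (0:ℝ) • (ω:E3) ∈ ball (0:E3) ε := mem_ball_smul 0 (by simpa using hε) ω
  have hA : ContinuousAt (fun r : ℝ => f (r • (ω:E3))) 0 := by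
    have := ContinuousAt.comp (f := fun r : ℝ => r • (ω:E3)) (x := (0:ℝ))
      (hfc.continuousAt (isOpen_ball.mem_nhds h0)) hmap.continuousAt
    exact this
  have hB : ContinuousAt (fun r : ℝ => fderiv ℝ f (r • (ω:E3))) 0 := by
    have := ContinuousAt.comp (f := fun r : ℝ => r • (ω:E3)) (x := (0:ℝ))
      (hfd.continuousAt (isOpen_ball.mem_nhds h0)) hmap.continuousAt
    exact this
  have hD : ContinuousAt (fun r : ℝ => fderiv ℝ f (r • (ω:E3)) (ω:E3)) 0 := by
    have happ : Continuous (fun q : (E3 →L[ℝ] ℂ) × E3 => q.1 q.2) :=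
      isBoundedBilinearMap_apply.continuous
    have := ContinuousAt.comp (f := fun r : ℝ => (fderiv ℝ f (r • (ω:E3)), (ω:E3)))
      (x := (0:ℝ)) happ.continuousAt (hB.prodMk continuousAt_const)
    exact this
  unfold Gf
  exact continuousAt_const.mul
    (((Complex.continuous_im.continuousAt.comp (continuousAt_const.mul hA)).add
      (continuousAt_id.mul (Complex.continuous_im.continuousAt.comp
        (continuousAt_const.mul hD)))).add
      ((continuousAt_id.pow 2).mul (Complex.continuous_im.continuousAt.comp
        ((Complex.continuous_conj.continuousAt.comp hA).mul hD))))

lemma continuousOn_Gf_joint (hfc : ContinuousOn f (ball 0 ε))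
    (hfd : ContinuousOn (fderiv ℝ f) (ball 0 ε)) :
    ContinuousOn (fun p : ℝ × sphere (0:E3) 1 => Gf a c f p.1 p.2)
      ((fun p : ℝ × sphere (0:E3) 1 => p.1 • (p.2:E3)) ⁻¹' (ball 0 ε)) := by
  have hcoe : Continuous (fun ω : sphere (0:E3) 1 => (ω:E3)) := continuous_subtype_val
  have hh : Continuous (fun p : ℝ × sphere (0:E3) 1 => p.1 • (p.2:E3)) :=
    continuous_fst.smul (hcoe.comp continuous_snd)
  have hA : ContinuousOn (fun p : ℝ × sphere (0:E3) 1 => f (p.1 • (p.2:E3)))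
      ((fun p : ℝ × sphere (0:E3) 1 => p.1 • (p.2:E3)) ⁻¹' (ball 0 ε)) :=
    hfc.comp hh.continuousOn (fun p hp => hp)
  have hB : ContinuousOn (fun p : ℝ × sphere (0:E3) 1 => fderiv ℝ f (p.1 • (p.2:E3)))
      ((fun p : ℝ × sphere (0:E3) 1 => p.1 • (p.2:E3)) ⁻¹' (ball 0 ε)) :=
    hfd.comp hh.continuousOn (fun p hp => hp)
  have hD : ContinuousOn
      (fun p : ℝ × sphere (0:E3) 1 => fderiv ℝ f (p.1 • (p.2:E3)) (p.2:E3))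
      ((fun p : ℝ × sphere (0:E3) 1 => p.1 • (p.2:E3)) ⁻¹' (ball 0 ε)) :=
    hB.clm_apply ((hcoe.comp continuous_snd).continuousOn)
  unfold Gf
  apply continuousOn_const.mul
  apply ContinuousOn.add
  apply ContinuousOn.add
  · exact Complex.continuous_im.comp_continuousOn (continuousOn_const.mul hA)
  · exact continuousOn_fst.mul
      (Complex.continuous_im.comp_continuousOn (continuousOn_const.mul hD))
  · exact (continuousOn_fst.pow 2).mul (Complex.continuous_im.comp_continuousOn
      (((Complex.continuous_conj.comp_continuousOn hA)).mul hD))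

lemma sphere_measure_toReal :
    ((volume : Measure E3).toSphere Set.univ).toReal = 4 * π := by
  rw [Measure.toSphere_apply_univ, EuclideanSpace.volume_ball]
  have h1 : Real.Gamma ((Fintype.card (Fin 3) : ℝ) / 2 + 1) = 3 / 4 * Real.sqrt π := by
    have h : ((Fintype.card (Fin 3) : ℝ) / 2 + 1) = 3 / 2 + 1 := by norm_num
    rw [h, Real.Gamma_add_one (by norm_num)]
    have h2 : (3 / 2 : ℝ) = 1 / 2 + 1 := by norm_num
    rw [h2, Real.Gamma_add_one (by norm_num), Real.Gamma_one_half_eq]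
    ring
  rw [h1]
  have hs : Real.sqrt π > 0 := Real.sqrt_pos.2 Real.pi_pos
  have hsq : Real.sqrt π ^ 2 = π := Real.sq_sqrt Real.pi_pos.le
  have hX : Real.sqrt π ^ Fintype.card (Fin 3) / (3 / 4 * Real.sqrt π) = 4 / 3 * π := by
    have h : Fintype.card (Fin 3) = 3 := by norm_num
    rw [h]; field_simp; nlinarith [hsq, hs]
  rw [hX]
  have hdim : Module.finrank ℝ E3 = 3 := by simp [finrank_euclideanSpace]
  rw [hdim, ENNReal.toReal_mul, ENNReal.toReal_mul, ENNReal.toReal_pow,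
    ENNReal.toReal_ofReal (by norm_num), ENNReal.toReal_ofReal (by positivity)]
  norm_num; ring

lemma deriv_eq (c : ℂ) (f : E3 → ℂ) (ω : sphere (0:E3) 1) {r : ℝ} (hr : 0 < r)
    (hdiff : DifferentiableAt ℝ f (r • (ω:E3))) :
    deriv (fun s : ℝ => c / (‖s • (ω:E3)‖ : ℝ) + f (s • (ω:E3))) r
      = -c / (r:ℂ)^2 + fderiv ℝ f (r • (ω:E3)) (ω:E3) := by
  have heq : (fun s : ℝ => c / (‖s • (ω:E3)‖ : ℝ) + f (s • (ω:E3)))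
      =ᶠ[nhds r] (fun s : ℝ => c / (s:ℂ) + f (s • (ω:E3))) := by
    filter_upwards [Ioi_mem_nhds hr] with s hs
    rw [norm_smul, Real.norm_eq_abs, abs_of_pos hs, norm_eq_of_mem_sphere ω, mul_one]
  rw [heq.deriv_eq]
  have hne : (r:ℂ) ≠ 0 := by exact_mod_cast hr.ne'
  have h1 : HasDerivAt (fun s : ℝ => c / (s:ℂ)) (-c / (r:ℂ)^2) r := by
    have h := ((hasDerivAt_inv hne).const_mul c).comp_ofReal
    simp only [div_eq_mul_inv]
    convert h using 1
    field_simp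
  have h2 : HasDerivAt (fun s : ℝ => f (s • (ω:E3))) (fderiv ℝ f (r • (ω:E3)) (ω:E3)) r := by
    have hmap : HasDerivAt (fun s : ℝ => s • (ω:E3)) ((ω:E3)) r := by
      simpa using (hasDerivAt_id r).smul_const (ω:E3)
    exact hdiff.hasFDerivAt.comp_hasDerivAt r hmap
  exact (h1.add h2).deriv

lemma alg_identity (c F D : ℂ) {r : ℝ} (hr : 0 < r) :
    r^2 * (((starRingEnd ℂ) (c/(r:ℂ) + F)) * (-c/(r:ℂ)^2 + D)).im
    = ((starRingEnd ℂ) c * F).im + r * ((starRingEnd ℂ) c * D).im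
      + r^2 * ((starRingEnd ℂ) F * D).im := by
  have hne : (r:ℂ) ≠ 0 := by exact_mod_cast hr.ne'
  have hcc : (starRingEnd ℂ) c * c = ((Complex.normSq c : ℝ) : ℂ) := by
    rw [mul_comm, Complex.mul_conj]
  have key : ((r:ℂ)^2) * (((starRingEnd ℂ) (c/(r:ℂ) + F)) * (-c/(r:ℂ)^2 + D))
      = (((-(Complex.normSq c / r) : ℝ)) : ℂ)
        + ((r:ℂ) * ((starRingEnd ℂ) c * D) - (starRingEnd ℂ) F * c
          + (r:ℂ)^2 * ((starRingEnd ℂ) F * D)) := by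
    rw [map_add, map_div₀, Complex.conj_ofReal]
    push_cast
    field_simp
    linear_combination (-1:ℂ) * hcc
  have him := congrArg Complex.im key
  rw [show ((r:ℂ)^2) = ((r^2 : ℝ) : ℂ) by push_cast; ring] at him ⊢
  rw [Complex.im_ofReal_mul] at him
  rw [him]
  have hconj : ((starRingEnd ℂ) F * c).im = -((starRingEnd ℂ) c * F).im := by
    have h : (starRingEnd ℂ) ((starRingEnd ℂ) c * F) = (starRingEnd ℂ) F * c := by
      simp [mul_comm]
    rw [← h, Complex.conj_im]
  rw [Complex.add_im, Complex.add_im, Complex.sub_im, Complex.ofReal_im,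
    Complex.im_ofReal_mul, hconj, Complex.im_ofReal_mul]
  ring

end

end FluxAux

open FluxAux

theorem flux_into_origin_of_one_over_r_singularity
    (ℏ m : ℝ) (hℏ : 0 < ℏ) (hm : 0 < m) (c : ℂ)
    (f : EuclideanSpace ℝ (Fin 3) → ℂ)
    (U : Set (EuclideanSpace ℝ (Fin 3))) (hU : U ∈ nhds (0 : EuclideanSpace ℝ (Fin 3)))
    (hf : ContDiffOn ℝ 1 f U) :
    Filter.Tendsto
      (fun r : ℝ =>
        ∫ ω : sphere (0 : EuclideanSpace ℝ (Fin 3)) 1,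
          r ^ 2 *
            ((ℏ / m) *
              ((starRingEnd ℂ) (c / (‖r • (ω : EuclideanSpace ℝ (Fin 3))‖ : ℝ)
                  + f (r • (ω : EuclideanSpace ℝ (Fin 3)))) *
                deriv (fun s : ℝ =>
                  c / (‖s • (ω : EuclideanSpace ℝ (Fin 3))‖ : ℝ)
                    + f (s • (ω : EuclideanSpace ℝ (Fin 3)))) r).im)
          ∂((volume : Measure (EuclideanSpace ℝ (Fin 3))).toSphere))
      (nhdsWithin 0 (Set.Ioi 0))
      (nhds ((4 * π * ℏ / m) * ((starRingEnd ℂ) c * f 0).im)) := by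
  obtain ⟨ε, hε, hball⟩ : ∃ ε > 0, ball (0:E3) ε ⊆ U := Metric.mem_nhds_iff.1 hU
  set μ := (volume : Measure E3).toSphere with hμ
  have hfc : ContinuousOn f (ball 0 ε) := (hf.mono hball).continuousOn
  have hfd : ContinuousOn (fderiv ℝ f) (ball 0 ε) :=
    (hf.mono hball).continuousOn_fderiv_of_isOpen isOpen_ball le_rfl
  have hdiffat : ∀ x ∈ ball (0:E3) ε, DifferentiableAt ℝ f x := fun x hx =>
    (((hf.mono hball).differentiableOn one_ne_zero).differentiableAt (isOpen_ball.mem_nhds hx))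
  -- measurability
  have hmeas : ∀ᶠ r in nhds (0:ℝ), AEStronglyMeasurable (Gf (ℏ/m) c f r) μ := by
    filter_upwards [Metric.ball_mem_nhds (0:ℝ) hε] with r hr
    have hrε : |r| < ε := by simpa [Real.dist_eq] using hr
    exact (continuous_Gf_omega hfc hfd hrε).aestronglyMeasurable
  -- bound
  have hΦ := continuousOn_Gf_joint (a := ℏ/m) (c := c) hfc hfd
  have hKcomp : IsCompact ((Set.Icc (-(ε/2)) (ε/2) ×ˢ Set.univ :
      Set (ℝ × sphere (0:E3) 1))) := isCompact_Icc.prod isCompact_univ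
  have hKV : (Set.Icc (-(ε/2)) (ε/2) ×ˢ Set.univ : Set (ℝ × sphere (0:E3) 1))
      ⊆ (fun p : ℝ × sphere (0:E3) 1 => p.1 • (p.2:E3)) ⁻¹' (ball 0 ε) := by
    rintro ⟨r, ω⟩ ⟨hr, -⟩
    exact mem_ball_smul r (lt_of_le_of_lt (abs_le.mpr hr) (by linarith)) ω
  obtain ⟨C, hC⟩ := hKcomp.exists_bound_of_continuousOn (hΦ.mono hKV)
  have hbound : ∀ᶠ r in nhds (0:ℝ), ∀ᵐ ω ∂μ, ‖Gf (ℏ/m) c f r ω‖ ≤ C := by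
    filter_upwards [Icc_mem_nhds (by linarith : -(ε/2) < (0:ℝ)) (by linarith : (0:ℝ) < ε/2)]
      with r hr
    exact Filter.Eventually.of_forall fun ω => hC (r, ω) ⟨hr, Set.mem_univ _⟩
  -- continuity in r
  have hcont : ∀ᵐ ω ∂μ, ContinuousAt (fun r => Gf (ℏ/m) c f r ω) 0 :=
    Filter.Eventually.of_forall fun ω => continuousAt_Gf_r hε hfc hfd ω
  have hT : ContinuousAt (fun r => ∫ ω, Gf (ℏ/m) c f r ω ∂μ) 0 :=
    continuousAt_of_dominated hmeas hbound (integrable_const C) hcont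
  -- value at 0
  have hG0 : (fun ω : sphere (0:E3) 1 => Gf (ℏ/m) c f 0 ω)
      = fun _ => (ℏ/m) * ((starRingEnd ℂ) c * f 0).im := by
    funext ω
    simp [Gf]
  have hval : (∫ ω, Gf (ℏ/m) c f 0 ω ∂μ)
      = (4 * π * ℏ / m) * ((starRingEnd ℂ) c * f 0).im := by
    rw [hG0, integral_const, hμ, smul_eq_mul, measureReal_def, sphere_measure_toReal]
    field_simp
  -- conclude
  have hT' : Filter.Tendsto (fun r => ∫ ω, Gf (ℏ/m) c f r ω ∂μ)
      (nhdsWithin 0 (Set.Ioi 0))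
      (nhds ((4 * π * ℏ / m) * ((starRingEnd ℂ) c * f 0).im)) := by
    rw [← hval]
    exact hT.tendsto.mono_left nhdsWithin_le_nhds
  apply hT'.congr'
  filter_upwards [Ioo_mem_nhdsGT hε] with r hr
  obtain ⟨hr0, hrε⟩ := hr
  apply integral_congr_ae
  refine Filter.Eventually.of_forall fun ω => ?_
  have hmem : r • (ω:E3) ∈ ball (0:E3) ε :=
    mem_ball_smul r (by rwa [abs_of_pos hr0]) ω
  have hnorm : (‖r • (ω:E3)‖ : ℝ) = r := by
    rw [norm_smul, Real.norm_eq_abs, abs_of_pos hr0, norm_eq_of_mem_sphere ω, mul_one]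
  show Gf (ℏ/m) c f r ω = r ^ 2 * ((ℏ / m) *
    ((starRingEnd ℂ) (c / (‖r • (ω:E3)‖ : ℝ) + f (r • (ω:E3))) *
      deriv (fun s : ℝ => c / (‖s • (ω:E3)‖ : ℝ) + f (s • (ω:E3))) r).im)
  rw [deriv_eq c f ω hr0 (hdiffat _ hmem), hnorm]
  rw [show r ^ 2 * ((ℏ / m) * (((starRingEnd ℂ) (c / (r:ℂ) + f (r • (ω:E3)))) *
      (-c / (r:ℂ)^2 + fderiv ℝ f (r • (ω:E3)) (ω:E3))).im)
    = (ℏ/m) * (r ^ 2 * (((starRingEnd ℂ) (c / (r:ℂ) + f (r • (ω:E3)))) *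
      (-c / (r:ℂ)^2 + fderiv ℝ f (r • (ω:E3)) (ω:E3))).im) by ring]
  rw [alg_identity c (f (r • (ω:E3))) (fderiv ℝ f (r • (ω:E3)) (ω:E3)) hr0]
  rfl
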